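/- Quotient concavity propagates: if Q = H_{k+1}/H_k is concave on Γ_{k+1} and σ_k = H_k^{1/k} satisfies the Hessian bound D²H_k(ξ,ξ) ≤ (1 − 1/k) H_k⁻¹ (DH_k·ξ)² on Γ₊, then H_{k+1} satisfies D²H_{k+1}(ξ,ξ) ≤ (1 − 1/(k+1)) H_{k+1}⁻¹ (DH_{k+1}·ξ)², i.e. σ_{k+1} = H_{k+1}^{1/(k+1)} is concave on Γ₊. -/

import Mathlib

open Finset

open Set Filter Topology

/-- If `f` is antitone on an open neighbourhood of `x` and has derivative `f'` at `x`,
then `f' ≤ 0`. -/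
lemma deriv_nonpos_of_antitoneOn {f : ℝ → ℝ} {s : Set ℝ} {x f' : ℝ}
    (hs : IsOpen s) (hx : x ∈ s) (hf : AntitoneOn f s) (hd : HasDerivAt f f' x) :
    f' ≤ 0 := by
  have htend : Tendsto (slope f x) (𝓝[>] x) (𝓝 f') :=
    (hasDerivAt_iff_tendsto_slope.mp hd).mono_left
      (nhdsWithin_mono x fun y hy => ne_of_gt hy)
  refine le_of_tendsto htend ?_
  have hmem : s ∩ Ioi x ∈ 𝓝[>] x :=
    inter_mem (mem_nhdsWithin_of_mem_nhds (hs.mem_nhds hx)) self_mem_nhdsWithin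
  filter_upwards [hmem] with y hy
  rcases hy with ⟨hys, hyx⟩
  rw [slope_def_field]
  have h1 : f y ≤ f x := hf hx hys (le_of_lt hyx)
  have h2 : 0 < y - x := sub_pos.2 hyx
  exact div_nonpos_iff.mpr (Or.inr ⟨sub_nonpos.2 h1, h2.le⟩)

section Line

variable {E : Type*} [NormedAddCommGroup E] [NormedSpace ℝ E]

lemma line_hasDerivAt {f : E → ℝ} {U : Set E} (hU : IsOpen U) (hf : ContDiffOn ℝ 2 f U)
    (x v : E) {t : ℝ} (ht : x + t • v ∈ U) :
    HasDerivAt (fun s => f (x + s • v)) (fderiv ℝ f (x + t • v) v) t := by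
  have hL : HasDerivAt (fun s : ℝ => x + s • v) v t := by
    simpa using ((hasDerivAt_id t).smul_const v).const_add x
  have hfd : DifferentiableAt ℝ f (x + t • v) :=
    (hf.contDiffAt (hU.mem_nhds ht)).differentiableAt (by norm_num)
  simpa [Function.comp_def] using hfd.hasFDerivAt.comp_hasDerivAt t hL

lemma line_hasDerivAt2 {f : E → ℝ} {U : Set E} (hU : IsOpen U) (hf : ContDiffOn ℝ 2 f U)
    (x v : E) {t : ℝ} (ht : x + t • v ∈ U) :
    HasDerivAt (fun s => fderiv ℝ f (x + s • v) v)
      (fderiv ℝ (fderiv ℝ f) (x + t • v) v v) t := by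
  have hL : HasDerivAt (fun s : ℝ => x + s • v) v t := by
    simpa using ((hasDerivAt_id t).smul_const v).const_add x
  have h2 : ContDiffAt ℝ 2 f (x + t • v) := hf.contDiffAt (hU.mem_nhds ht)
  have hd : DifferentiableAt ℝ (fderiv ℝ f) (x + t • v) :=
    (h2.fderiv_right (m := 1) (by norm_num)).differentiableAt (by norm_num)
  have hφ : HasDerivAt (fun s : ℝ => fderiv ℝ f (x + s • v))
      (fderiv ℝ (fderiv ℝ f) (x + t • v) v) t := by
    simpa [Function.comp_def] using hd.hasFDerivAt.comp_hasDerivAt t hL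
  have := hφ.clm_apply (hasDerivAt_const t v)
  simpa using this

end Line

/-- The key pointwise algebraic estimate. -/
lemma key_algebra (K P P1 Qv q2 e u r w : ℝ) (hK : 1 ≤ K) (hP : 0 < P) (hP1 : 0 < P1)
    (hQP : P1 = Qv * P) (hq2 : q2 ≤ 0) (he : e ≤ (1 - 1 / K) * P⁻¹ * u ^ 2)
    (hw : w = r * P + Qv * u) :
    q2 * P + r * u + r * u + Qv * e ≤ (1 - 1 / (K + 1)) * P1⁻¹ * w ^ 2 := by
  have hK0 : (0:ℝ) < K := lt_of_lt_of_le one_pos hK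
  have hK1 : (0:ℝ) < K + 1 := by linarith
  have hQv : 0 < Qv := by
    rcases lt_trichotomy Qv 0 with h | h | h
    · nlinarith
    · nlinarith
    · exact h
  have he' : e * (K * P) ≤ (K - 1) * u ^ 2 := by
    have heq : (1 - 1 / K) * P⁻¹ * u ^ 2 = (K - 1) * u ^ 2 / (K * P) := by
      field_simp
    rw [heq, le_div_iff₀ (by positivity)] at he
    linarith
  have hgoal : (1 - 1 / (K + 1)) * P1⁻¹ * w ^ 2 = K * w ^ 2 / ((K + 1) * P1) := by
    field_simp
    ring
  rw [hgoal, le_div_iff₀ (by positivity), hw, hQP]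
  nlinarith [sq_nonneg (K * r * P - Qv * u), mul_le_mul_of_nonneg_left he'
      (by positivity : (0:ℝ) ≤ (K + 1) * Qv ^ 2), mul_pos hQv hP,
    mul_nonpos_of_nonpos_of_nonneg hq2 (by positivity : (0:ℝ) ≤ P * ((K+1) * (Qv * P)) * K)]

/-- Nonpositivity of the second derivative of `c ↦ c ^ α` composed along a line. -/
lemma rpow_second_nonpos (c d e α : ℝ) (hc : 0 < c) (hα : 0 < α) (hα1 : α ≤ 1)
    (he : e ≤ (1 - α) * c⁻¹ * d ^ 2) :
    e * α * c ^ (α - 1) + (d * α) * (d * (α - 1) * c ^ (α - 2)) ≤ 0 := by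
  have h1 : c ^ (α - 1) = c ^ (α - 2) * c := by
    rw [show α - 1 = α - 2 + 1 by ring, Real.rpow_add_one hc.ne']
  have hcp : (0:ℝ) < c ^ (α - 2) := Real.rpow_pos_of_pos hc _
  have hec : e * c ≤ (1 - α) * d ^ 2 := by
    have := mul_le_mul_of_nonneg_right he hc.le
    calc e * c ≤ (1 - α) * c⁻¹ * d ^ 2 * c := this
      _ = (1 - α) * d ^ 2 := by field_simp
  have : e * α * c ^ (α - 1) + (d * α) * (d * (α - 1) * c ^ (α - 2))
      = α * c ^ (α - 2) * (e * c + (α - 1) * d ^ 2) := by rw [h1]; ring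
  rw [this]
  have hsum : e * c + (α - 1) * d ^ 2 ≤ 0 := by nlinarith
  exact mul_nonpos_of_nonneg_of_nonpos (by positivity) hsum

/-- the inductive step for concavity of the roots of the
elementary symmetric polynomials: if `Q = H_{k+1}/H_k` is concave and `H_k`
satisfies `D²H_k(ξ,ξ) ≤ (1−1/k) H_k⁻¹ (DH_k·ξ)²` on `Γ₊`, then `H_{k+1}`
satisfies `D²H_{k+1}(ξ,ξ) ≤ (1−1/(k+1)) H_{k+1}⁻¹ (DH_{k+1}·ξ)²`, i.e.
`σ_{k+1} = H_{k+1}^{1/(k+1)}` is concave on `Γ₊`. -/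
theorem quotient_concavity_step (n k : ℕ) (hk : 1 ≤ k)
    (Hk Hk1 Q : (Fin n → ℝ) → ℝ)
    (hprod : ∀ κ ∈ {κ : Fin n → ℝ | ∀ i, 0 < κ i}, Hk1 κ = Q κ * Hk κ)
    (hHkpos : ∀ κ ∈ {κ : Fin n → ℝ | ∀ i, 0 < κ i}, 0 < Hk κ)
    (hHk1pos : ∀ κ ∈ {κ : Fin n → ℝ | ∀ i, 0 < κ i}, 0 < Hk1 κ)
    (hQconc : ConcaveOn ℝ {κ : Fin n → ℝ | ∀ i, 0 < κ i} Q)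
    (hHkC2 : ContDiffOn ℝ 2 Hk {κ : Fin n → ℝ | ∀ i, 0 < κ i})
    (hHk1C2 : ContDiffOn ℝ 2 Hk1 {κ : Fin n → ℝ | ∀ i, 0 < κ i})
    (hQC2 : ContDiffOn ℝ 2 Q {κ : Fin n → ℝ | ∀ i, 0 < κ i})
    (hind : ∀ κ ∈ {κ : Fin n → ℝ | ∀ i, 0 < κ i}, ∀ ξ : Fin n → ℝ,
      iteratedFDeriv ℝ 2 Hk κ ![ξ, ξ]
        ≤ (1 - 1 / (k : ℝ)) * (Hk κ)⁻¹ * (fderiv ℝ Hk κ ξ) ^ 2) :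
    (∀ κ ∈ {κ : Fin n → ℝ | ∀ i, 0 < κ i}, ∀ ξ : Fin n → ℝ,
      iteratedFDeriv ℝ 2 Hk1 κ ![ξ, ξ]
        ≤ (1 - 1 / ((k : ℝ) + 1)) * (Hk1 κ)⁻¹ * (fderiv ℝ Hk1 κ ξ) ^ 2)
    ∧ ConcaveOn ℝ {κ : Fin n → ℝ | ∀ i, 0 < κ i}
        (fun κ => Hk1 κ ^ ((1 : ℝ) / ((k : ℝ) + 1))) := by
  set S : Set (Fin n → ℝ) := {κ : Fin n → ℝ | ∀ i, 0 < κ i} with hSdef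
  have hSpi : S = Set.pi Set.univ (fun _ : Fin n => Ioi (0:ℝ)) := by
    ext κ; simp [hSdef, Set.mem_pi]
  have hSopen : IsOpen S := by
    rw [hSpi]; exact isOpen_set_pi Set.finite_univ fun i _ => isOpen_Ioi
  have hSconv : Convex ℝ S := by
    rw [hSpi]; exact convex_pi fun i _ => convex_Ioi 0
  have hKcast : (1:ℝ) ≤ (k:ℝ) := by exact_mod_cast hk
  -- convexity of line preimages
  have hOconv : ∀ x v : Fin n → ℝ, Convex ℝ {t : ℝ | x + t • v ∈ S} := by
    intro x v t1 ht1 t2 ht2 a b ha hb hab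
    have hpt : x + (a • t1 + b • t2) • v = a • (x + t1 • v) + b • (x + t2 • v) := by
      funext i
      simp only [Pi.add_apply, Pi.smul_apply, smul_eq_mul]
      linear_combination (x i) * hab.symm
    show x + (a • t1 + b • t2) • v ∈ S
    rw [hpt]
    exact hSconv ht1 ht2 ha hb hab
  have hOopen : ∀ x v : Fin n → ℝ, IsOpen {t : ℝ | x + t • v ∈ S} := by
    intro x v
    exact hSopen.preimage (continuous_const.add (continuous_id.smul continuous_const))
  -- Part 1
  have part1 : ∀ κ ∈ S, ∀ ξ : Fin n → ℝ,
      iteratedFDeriv ℝ 2 Hk1 κ ![ξ, ξ]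
        ≤ (1 - 1 / ((k : ℝ) + 1)) * (Hk1 κ)⁻¹ * (fderiv ℝ Hk1 κ ξ) ^ 2 := by
    intro κ hκ ξ
    set O : Set ℝ := {t : ℝ | κ + t • ξ ∈ S} with hOdef
    have hOo : IsOpen O := hOopen κ ξ
    have hL0 : κ + (0:ℝ) • ξ = κ := by simp
    have h0 : (0:ℝ) ∈ O := by show κ + (0:ℝ) • ξ ∈ S; rw [hL0]; exact hκ
    have hmem : ∀ {t : ℝ}, t ∈ O → κ + t • ξ ∈ S := fun h => h
    -- first-derivative product rule on O
    have hd1 : ∀ t ∈ O, fderiv ℝ Hk1 (κ + t • ξ) ξ =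
        fderiv ℝ Q (κ + t • ξ) ξ * Hk (κ + t • ξ)
          + Q (κ + t • ξ) * fderiv ℝ Hk (κ + t • ξ) ξ := by
      intro t ht
      have hq := line_hasDerivAt hSopen hQC2 κ ξ (hmem ht)
      have hhk := line_hasDerivAt hSopen hHkC2 κ ξ (hmem ht)
      have hhk1 := line_hasDerivAt hSopen hHk1C2 κ ξ (hmem ht)
      have heq : (fun s => Hk1 (κ + s • ξ)) =ᶠ[𝓝 t]
          fun s => Q (κ + s • ξ) * Hk (κ + s • ξ) :=
        Filter.eventuallyEq_of_mem (hOo.mem_nhds ht) fun s hs => hprod _ hs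
      exact hhk1.unique ((hq.mul hhk).congr_of_eventuallyEq heq)
    -- derivatives at 0
    have hqd := line_hasDerivAt hSopen hQC2 κ ξ (hmem h0)
    have hkd := line_hasDerivAt hSopen hHkC2 κ ξ (hmem h0)
    have hq2d := line_hasDerivAt2 hSopen hQC2 κ ξ (hmem h0)
    have hk2d := line_hasDerivAt2 hSopen hHkC2 κ ξ (hmem h0)
    have h12d := line_hasDerivAt2 hSopen hHk1C2 κ ξ (hmem h0)
    rw [hL0] at hqd hkd hq2d hk2d h12d
    -- second derivative of Hk1 along the line via the product rule
    have hrhs : HasDerivAt (fun s : ℝ => fderiv ℝ Q (κ + s • ξ) ξ * Hk (κ + s • ξ)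
          + Q (κ + s • ξ) * fderiv ℝ Hk (κ + s • ξ) ξ)
        (fderiv ℝ (fderiv ℝ Q) κ ξ ξ * Hk κ + fderiv ℝ Q κ ξ * fderiv ℝ Hk κ ξ
          + (fderiv ℝ Q κ ξ * fderiv ℝ Hk κ ξ + Q κ * fderiv ℝ (fderiv ℝ Hk) κ ξ ξ)) (0:ℝ) := by
      simpa [Pi.mul_def, Pi.add_def] using (hq2d.mul hkd).add (hqd.mul hk2d)
    have heq2 : (fun s : ℝ => fderiv ℝ Hk1 (κ + s • ξ) ξ) =ᶠ[𝓝 (0:ℝ)]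
        fun s : ℝ => fderiv ℝ Q (κ + s • ξ) ξ * Hk (κ + s • ξ)
          + Q (κ + s • ξ) * fderiv ℝ Hk (κ + s • ξ) ξ :=
      Filter.eventuallyEq_of_mem (hOo.mem_nhds h0) fun s hs => hd1 s hs
    have hDeq : fderiv ℝ (fderiv ℝ Hk1) κ ξ ξ
        = fderiv ℝ (fderiv ℝ Q) κ ξ ξ * Hk κ + fderiv ℝ Q κ ξ * fderiv ℝ Hk κ ξ
          + (fderiv ℝ Q κ ξ * fderiv ℝ Hk κ ξ + Q κ * fderiv ℝ (fderiv ℝ Hk) κ ξ ξ) :=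
      h12d.unique (hrhs.congr_of_eventuallyEq heq2)
    -- concavity of Q along the line gives nonpositive second derivative
    have hqconcO : ConcaveOn ℝ O (fun t => Q (κ + t • ξ)) := by
      refine ⟨hOconv κ ξ, ?_⟩
      intro t1 ht1 t2 ht2 a b ha hb hab
      have hpt : κ + (a • t1 + b • t2) • ξ = a • (κ + t1 • ξ) + b • (κ + t2 • ξ) := by
        funext i
        simp only [Pi.add_apply, Pi.smul_apply, smul_eq_mul]
        linear_combination (κ i) * hab.symm
      show a • Q (κ + t1 • ξ) + b • Q (κ + t2 • ξ) ≤ Q (κ + (a • t1 + b • t2) • ξ)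
      rw [hpt]
      exact hQconc.2 (hmem ht1) (hmem ht2) ha hb hab
    have hq1anti : AntitoneOn (fun t => fderiv ℝ Q (κ + t • ξ) ξ) O := by
      have hder : AntitoneOn (deriv fun t => Q (κ + t • ξ)) O :=
        hqconcO.antitoneOn_deriv fun t ht =>
          (line_hasDerivAt hSopen hQC2 κ ξ (hmem ht)).differentiableAt
      intro t1 ht1 t2 ht2 h12
      have e1 := (line_hasDerivAt hSopen hQC2 κ ξ (hmem ht1)).deriv
      have e2 := (line_hasDerivAt hSopen hQC2 κ ξ (hmem ht2)).deriv
      simp only at e1 e2 ⊢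
      rw [← e1, ← e2]
      exact hder ht1 ht2 h12
    have hq2nonpos : fderiv ℝ (fderiv ℝ Q) κ ξ ξ ≤ 0 := by
      have hq2d' := line_hasDerivAt2 hSopen hQC2 κ ξ (hmem h0)
      rw [hL0] at hq2d'
      exact deriv_nonpos_of_antitoneOn hOo h0 hq1anti hq2d'
    -- induction hypothesis bound
    have hindκ := hind κ hκ ξ
    rw [iteratedFDeriv_two_apply] at hindκ
    simp only [Matrix.cons_val_zero, Matrix.cons_val_one, Matrix.head_cons] at hindκ
    -- first-derivative product rule at 0
    have hw : fderiv ℝ Hk1 κ ξ = fderiv ℝ Q κ ξ * Hk κ + Q κ * fderiv ℝ Hk κ ξ := by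
      have := hd1 0 h0; rwa [hL0] at this
    rw [iteratedFDeriv_two_apply]
    simp only [Matrix.cons_val_zero, Matrix.cons_val_one, Matrix.head_cons]
    rw [hDeq]
    have := key_algebra (k:ℝ) (Hk κ) (Hk1 κ) (Q κ) (fderiv ℝ (fderiv ℝ Q) κ ξ ξ)
      (fderiv ℝ (fderiv ℝ Hk) κ ξ ξ) (fderiv ℝ Hk κ ξ) (fderiv ℝ Q κ ξ) (fderiv ℝ Hk1 κ ξ)
      hKcast (hHkpos κ hκ) (hHk1pos κ hκ) (hprod κ hκ) hq2nonpos hindκ hw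
    linarith
  refine ⟨part1, hSconv, ?_⟩
  -- Part 2: concavity of Hk1 ^ (1/(k+1))
  intro x hx y hy a b ha hb hab
  set α : ℝ := (1:ℝ) / ((k:ℝ) + 1) with hαdef
  have hα : 0 < α := by positivity
  have hα1 : α ≤ 1 := by
    rw [hαdef, div_le_one (by linarith)]; linarith
  set v : Fin n → ℝ := y - x with hvdef
  set T : Set ℝ := {t : ℝ | x + t • v ∈ S} with hTdef
  have hTo : IsOpen T := hOopen x v
  have hTc : Convex ℝ T := hOconv x v
  have hmemT : ∀ {t : ℝ}, t ∈ T → x + t • v ∈ S := fun h => h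
  have h0T : (0:ℝ) ∈ T := by show x + (0:ℝ) • v ∈ S; simpa using hx
  have h1T : (1:ℝ) ∈ T := by
    show x + (1:ℝ) • v ∈ S
    have : x + (1:ℝ) • v = y := by rw [hvdef]; simp
    rwa [this]
  -- derivative data along the segment
  have hposT : ∀ {t : ℝ}, t ∈ T → 0 < Hk1 (x + t • v) := fun ht => hHk1pos _ (hmemT ht)
  have hgd : ∀ t ∈ T, HasDerivAt (fun s => Hk1 (x + s • v) ^ α)
      (fderiv ℝ Hk1 (x + t • v) v * α * Hk1 (x + t • v) ^ (α - 1)) t := fun t ht =>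
    (line_hasDerivAt hSopen hHk1C2 x v (hmemT ht)).rpow_const (Or.inl (hposT ht).ne')
  have hg2d : ∀ t ∈ T, HasDerivAt
      (fun s => fderiv ℝ Hk1 (x + s • v) v * α * Hk1 (x + s • v) ^ (α - 1))
      (fderiv ℝ (fderiv ℝ Hk1) (x + t • v) v v * α * Hk1 (x + t • v) ^ (α - 1)
        + (fderiv ℝ Hk1 (x + t • v) v * α)
          * (fderiv ℝ Hk1 (x + t • v) v * (α - 1) * Hk1 (x + t • v) ^ (α - 1 - 1))) t :=
    fun t ht =>
      ((line_hasDerivAt2 hSopen hHk1C2 x v (hmemT ht)).mul_const α).mul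
        ((line_hasDerivAt hSopen hHk1C2 x v (hmemT ht)).rpow_const (Or.inl (hposT ht).ne'))
  have hg2nonpos : ∀ t ∈ T,
      fderiv ℝ (fderiv ℝ Hk1) (x + t • v) v v * α * Hk1 (x + t • v) ^ (α - 1)
        + (fderiv ℝ Hk1 (x + t • v) v * α)
          * (fderiv ℝ Hk1 (x + t • v) v * (α - 1) * Hk1 (x + t • v) ^ (α - 1 - 1)) ≤ 0 := by
    intro t ht
    have hb' := part1 _ (hmemT ht) v
    rw [iteratedFDeriv_two_apply] at hb'
    simp only [Matrix.cons_val_zero, Matrix.cons_val_one, Matrix.head_cons] at hb'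
    have hα' : (1:ℝ) - 1 / ((k:ℝ) + 1) = 1 - α := by rw [hαdef]
    rw [hα'] at hb'
    have := rpow_second_nonpos (Hk1 (x + t • v)) (fderiv ℝ Hk1 (x + t • v) v)
      (fderiv ℝ (fderiv ℝ Hk1) (x + t • v) v v) α (hposT ht) hα hα1 hb'
    calc fderiv ℝ (fderiv ℝ Hk1) (x + t • v) v v * α * Hk1 (x + t • v) ^ (α - 1)
        + (fderiv ℝ Hk1 (x + t • v) v * α)
          * (fderiv ℝ Hk1 (x + t • v) v * (α - 1) * Hk1 (x + t • v) ^ (α - 1 - 1))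
        = fderiv ℝ (fderiv ℝ Hk1) (x + t • v) v v * α * Hk1 (x + t • v) ^ (α - 1)
          + (fderiv ℝ Hk1 (x + t • v) v * α)
            * (fderiv ℝ Hk1 (x + t • v) v * (α - 1) * Hk1 (x + t • v) ^ (α - 2)) := by
          rw [show α - 1 - 1 = α - 2 by ring]
      _ ≤ 0 := this
  -- concavity along the segment
  have hconcT : ConcaveOn ℝ T (fun t : ℝ => Hk1 (x + t • v) ^ α) := by
    refine concaveOn_of_hasDerivWithinAt2_nonpos
      (f' := fun t => fderiv ℝ Hk1 (x + t • v) v * α * Hk1 (x + t • v) ^ (α - 1))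
      (f'' := fun t => fderiv ℝ (fderiv ℝ Hk1) (x + t • v) v v * α * Hk1 (x + t • v) ^ (α - 1)
        + (fderiv ℝ Hk1 (x + t • v) v * α)
          * (fderiv ℝ Hk1 (x + t • v) v * (α - 1) * Hk1 (x + t • v) ^ (α - 1 - 1)))
      hTc (fun t ht => (hgd t ht).continuousAt.continuousWithinAt) ?_ ?_ ?_
    · intro t ht
      rw [hTo.interior_eq] at ht ⊢
      exact (hgd t ht).hasDerivWithinAt
    · intro t ht
      rw [hTo.interior_eq] at ht ⊢
      exact (hg2d t ht).hasDerivWithinAt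
    · intro t ht
      rw [hTo.interior_eq] at ht
      exact hg2nonpos t ht
  have hkey := hconcT.2 h0T h1T ha hb hab
  have hpt : x + (a • (0:ℝ) + b • (1:ℝ)) • v = a • x + b • y := by
    funext i
    simp only [hvdef, Pi.add_apply, Pi.smul_apply, Pi.sub_apply, smul_eq_mul]
    linear_combination (x i) * hab.symm
  have h0v : x + (0:ℝ) • v = x := by simp
  have h1v : x + (1:ℝ) • v = y := by rw [hvdef]; simp
  simp only [h0v, h1v, hpt] at hkey
  simpa using hkey
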